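/- Correctness of the observability-verification algorithm: Let G = (X, x0, Σ, δ, ρ) be a PDES with controllable events Σc and observable events Σo, and H = (Q, q0, Σ, δH, ρH) a probabilistic automaton with L_H ⊆ L_G, and let G_to be the associated observability-testing automaton. Then L_H is not probabilistic observable w.r.t. G, Σc and Σo if and only if the state d of G_to is reachable from the initial state (x0, q0, x0, q0). -/

import Mathlib

open scoped BigOperators

noncomputable section

/-- Chain product: given step weights `w s σ` (interpreted as the conditional
probability of event `σ` after string `s`), `chainProd w pre rest` multiplies the
weights along `rest`, starting from the already-consumed prefix `pre`. -/
def chainProd {E : Type*} (w : List E → E → ℝ) : List E → List E → ℝ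
  | _, [] => 1
  | pre, σ :: rest => w pre σ * chainProd w (pre ++ [σ]) rest

/-- The (probabilistic) language generated by step weights `w`:
`langOf w [] = 1` and `langOf w (s ++ [σ]) = langOf w s * w s σ`. -/
def langOf {E : Type*} (w : List E → E → ℝ) : List E → ℝ := chainProd w []

/-- A probabilistic language over a finite event set `E`. -/
structure PLang (E : Type*) [Fintype E] where
  toFun : List E → ℝ
  nonneg : ∀ s, 0 ≤ toFun s
  le_one : ∀ s, toFun s ≤ 1
  eps : toFun [] = 1
  step : ∀ s, (∑ σ : E, toFun (s ++ [σ])) ≤ toFun s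

/-- `L1` is a probabilistic sublanguage of `L2`. -/
def PSub {E : Type*} (L1 L2 : List E → ℝ) : Prop :=
  (∀ s, 0 < L1 s → 0 < L2 s) ∧
  ∀ s, 0 < L1 s → ∀ σ : E, L1 (s ++ [σ]) / L1 s ≤ L2 (s ++ [σ]) / L2 s

/-- Intersection of probabilistic languages. -/
def pInter {E : Type*} (L1 L2 : List E → ℝ) : List E → ℝ :=
  langOf fun s σ => min (L1 (s ++ [σ]) / L1 s) (L2 (s ++ [σ]) / L2 s)

/-- Natural projection erasing the events outside the observable set `So`. -/
def proj {E : Type*} [DecidableEq E] (So : Finset E) (s : List E) : List E :=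
  s.filter fun σ => decide (σ ∈ So)

/-- A probabilistic discrete event system (probabilistic automaton). -/
structure PDES (X : Type*) (E : Type*) [Fintype E] where
  x0 : X
  trans : X → E → Option X
  prob : X → E → ℝ
  prob_nonneg : ∀ x σ, 0 ≤ prob x σ
  prob_le_one : ∀ x σ, prob x σ ≤ 1
  prob_pos_iff : ∀ x σ, 0 < prob x σ ↔ (trans x σ).isSome
  sum_le_one : ∀ x, (∑ σ : E, prob x σ) ≤ 1

/-- Extension of the partial transition function to strings. -/
def PDES.transStar {X E : Type*} [Fintype E] (G : PDES X E) (s : List E) : Option X :=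
  s.foldl (fun ox σ => ox.bind fun x => G.trans x σ) (some G.x0)

/-- Step weight of a PDES: `ρ(δ(x0,s),σ)` when `δ(x0,s)` is defined, `0` otherwise. -/
def PDES.w {X E : Type*} [Fintype E] (G : PDES X E) (s : List E) (σ : E) : ℝ :=
  (G.transStar s).elim 0 fun x => G.prob x σ

/-- The probabilistic language generated by a PDES. -/
def PDES.lang {X E : Type*} [Fintype E] (G : PDES X E) : List E → ℝ := langOf G.w

/-- The set of control patterns: subsets of events containing every uncontrollable event. -/
def ControlPatterns {E : Type*} [Fintype E] [DecidableEq E] (Sc : Finset E) :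
    Finset (Finset E) :=
  Finset.univ.filter fun θ => Scᶜ ⊆ θ

/-- `Sp` is a probabilistic P-supervisor for `G`: to every observation of a string in the
support of `L_G` it assigns a probability distribution on the control patterns. -/
def IsSupervisor {X E : Type*} [Fintype E] [DecidableEq E] (G : PDES X E)
    (Sc So : Finset E) (Sp : List E → Finset E → ℝ) : Prop :=
  ∀ s : List E, 0 < G.lang s →
    (∀ θ ∈ ControlPatterns Sc, 0 ≤ Sp (proj So s) θ) ∧
    (∑ θ ∈ ControlPatterns Sc, Sp (proj So s) θ) = 1

/-- The controlled probabilistic language `L_{Sp/G}`. -/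
def supLang {X E : Type*} [Fintype E] [DecidableEq E] (G : PDES X E)
    (Sc So : Finset E) (Sp : List E → Finset E → ℝ) : List E → ℝ :=
  langOf fun s σ =>
    G.w s σ * ∑ θ ∈ (ControlPatterns Sc).filter (fun θ => σ ∈ θ), Sp (proj So s) θ

/-- `K` is a scaling-factor function for `G`: on every observation of a string in the
support of `L_G` it takes values in `[0,1]` and equals `1` on uncontrollable events. -/
def IsScaling {X E : Type*} [Fintype E] [DecidableEq E] (G : PDES X E)
    (Sc So : Finset E) (K : List E → E → ℝ) : Prop :=
  ∀ s : List E, 0 < G.lang s → ∀ σ : E,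
    0 ≤ K (proj So s) σ ∧ K (proj So s) σ ≤ 1 ∧ (σ ∉ Sc → K (proj So s) σ = 1)

/-- The controlled probabilistic language `L_{K/G}`. -/
def kLang {X E : Type*} [Fintype E] [DecidableEq E] (G : PDES X E)
    (So : Finset E) (K : List E → E → ℝ) : List E → ℝ :=
  langOf fun s σ => G.w s σ * K (proj So s) σ

/-- Probabilistic controllability (language form). -/
def ProbControllable {E : Type*} (L M : List E → ℝ) (Sc : Finset E) : Prop :=
  ∀ s : List E, 0 < L s → ∀ σ : E, σ ∉ Sc →
    L (s ++ [σ]) / L s = M (s ++ [σ]) / M s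

/-- Probabilistic observability (language form). -/
def ProbObservable {E : Type*} [DecidableEq E] (L M : List E → ℝ)
    (Sc So : Finset E) : Prop :=
  ∀ s1 s2 : List E, 0 < L s1 → 0 < L s2 → proj So s1 = proj So s2 →
    ∀ σ ∈ Sc,
      (M (s1 ++ [σ]) / M s1) * (L (s2 ++ [σ]) / L s2) =
      (M (s2 ++ [σ]) / M s2) * (L (s1 ++ [σ]) / L s1)

/-- Probabilistic controllability (automata form). -/
def AutControllable {X Q E : Type*} [Fintype E] (G : PDES X E) (H : PDES Q E)
    (Sc : Finset E) : Prop :=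
  ∀ s : List E, 0 < H.lang s → ∀ x q,
    G.transStar s = some x → H.transStar s = some q →
    ∀ σ : E, σ ∉ Sc → H.prob q σ = G.prob x σ

/-- Probabilistic observability (automata form). -/
def AutObservable {X Q E : Type*} [Fintype E] [DecidableEq E] (G : PDES X E)
    (H : PDES Q E) (Sc So : Finset E) : Prop :=
  ∀ s1 s2 : List E, 0 < H.lang s1 → 0 < H.lang s2 → proj So s1 = proj So s2 →
    ∀ x1 q1 x2 q2,
      G.transStar s1 = some x1 → H.transStar s1 = some q1 →
      G.transStar s2 = some x2 → H.transStar s2 = some q2 →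
      ∀ σ ∈ Sc, G.prob x1 σ * H.prob q2 σ = G.prob x2 σ * H.prob q1 σ

/-- Reachability in the controllability-testing automaton `G_tc`.
States are pairs `(x,q)` (as `Sum.inl`) together with the special state `d` (`Sum.inr ()`). -/
inductive TcReach {X Q E : Type*} [Fintype E] (G : PDES X E) (H : PDES Q E)
    (Sc : Finset E) : (X × Q) ⊕ Unit → Prop
  | init : TcReach G H Sc (Sum.inl (G.x0, H.x0))
  | good (x q x' q' σ) : TcReach G H Sc (Sum.inl (x, q)) →
      G.trans x σ = some x' → H.trans q σ = some q' →
      ((σ ∉ Sc ∧ G.prob x σ = H.prob q σ) ∨ σ ∈ Sc) →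
      TcReach G H Sc (Sum.inl (x', q'))
  | bad (x q σ) : TcReach G H Sc (Sum.inl (x, q)) →
      σ ∉ Sc → G.prob x σ ≠ H.prob q σ →
      TcReach G H Sc (Sum.inr ())

/-- Reachability in the observability-testing automaton `G_to`.
States are 4-tuples `(x1,q1,x2,q2)` (as `Sum.inl`) together with the special state `d`. -/
inductive ToReach {X Q E : Type*} [Fintype E] (G : PDES X E) (H : PDES Q E)
    (Sc So : Finset E) : (X × Q × X × Q) ⊕ Unit → Prop
  | init : ToReach G H Sc So (Sum.inl (G.x0, H.x0, G.x0, H.x0))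
  | sync (x1 q1 x2 q2 x1' q1' x2' q2' σ) :
      ToReach G H Sc So (Sum.inl (x1, q1, x2, q2)) →
      G.trans x1 σ = some x1' → H.trans q1 σ = some q1' →
      G.trans x2 σ = some x2' → H.trans q2 σ = some q2' →
      (σ ∉ Sc ∨ (σ ∈ Sc ∧ G.prob x1 σ * H.prob q2 σ = G.prob x2 σ * H.prob q1 σ)) →
      ToReach G H Sc So (Sum.inl (x1', q1', x2', q2'))
  | bad (x1 q1 x2 q2 σ) :
      ToReach G H Sc So (Sum.inl (x1, q1, x2, q2)) →
      σ ∈ Sc → G.prob x1 σ * H.prob q2 σ ≠ G.prob x2 σ * H.prob q1 σ →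
      ToReach G H Sc So (Sum.inr ())
  | left (x1 q1 x2 q2 x1' q1' σ) :
      ToReach G H Sc So (Sum.inl (x1, q1, x2, q2)) → σ ∉ So →
      G.trans x1 σ = some x1' → H.trans q1 σ = some q1' →
      ToReach G H Sc So (Sum.inl (x1', q1', x2, q2))
  | right (x1 q1 x2 q2 x2' q2' σ) :
      ToReach G H Sc So (Sum.inl (x1, q1, x2, q2)) → σ ∉ So →
      G.trans x2 σ = some x2' → H.trans q2 σ = some q2' →
      ToReach G H Sc So (Sum.inl (x1, q1, x2', q2'))

/-- `H` is a probabilistic subautomaton of `G`, as witnessed by the state inclusion `e`. -/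
def SubautomatonVia {Q X E : Type*} [Fintype E] (H : PDES Q E) (G : PDES X E)
    (e : Q → X) : Prop :=
  Function.Injective e ∧ e H.x0 = G.x0 ∧
  ∀ q σ, H.prob q σ ≤ G.prob (e q) σ ∧
    ∀ q', H.trans q σ = some q' → G.trans (e q) σ = some (e q')

/-- The product of two PDESs. -/
def PDES.prod {X Q E : Type*} [Fintype E] (G : PDES X E) (H : PDES Q E) :
    PDES (X × Q) E where
  x0 := (G.x0, H.x0)
  trans := fun p σ => (G.trans p.1 σ).bind fun x => (H.trans p.2 σ).map fun q => (x, q)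
  prob := fun p σ => min (G.prob p.1 σ) (H.prob p.2 σ)
  prob_nonneg := fun p σ => le_min (G.prob_nonneg _ _) (H.prob_nonneg _ _)
  prob_le_one := fun p σ => le_trans (min_le_left _ _) (G.prob_le_one _ _)
  prob_pos_iff := by
    intro p σ
    rw [lt_min_iff, G.prob_pos_iff, H.prob_pos_iff]
    cases hG : G.trans p.1 σ <;> cases hH : H.trans p.2 σ <;> simp [hG, hH]
  sum_le_one := fun p =>
    le_trans (Finset.sum_le_sum fun σ _ => min_le_left _ _) (G.sum_le_one p.1)

end

noncomputable section Aux

lemma chainProd_snoc {E : Type*} (w : List E → E → ℝ) :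
    ∀ (rest pre : List E) (σ : E),
      chainProd w pre (rest ++ [σ]) = chainProd w pre rest * w (pre ++ rest) σ := by
  intro rest
  induction rest with
  | nil => intro pre σ; simp [chainProd]
  | cons a t ih =>
    intro pre σ
    simp only [List.cons_append, chainProd, List.append_eq, ih, mul_assoc,
      List.append_assoc, List.singleton_append, List.nil_append]

lemma langOf_snoc {E : Type*} (w : List E → E → ℝ) (s : List E) (σ : E) :
    langOf w (s ++ [σ]) = langOf w s * w s σ := by
  simpa [langOf] using chainProd_snoc w s [] σ

lemma transStar_snoc {X E : Type*} [Fintype E] (G : PDES X E) (s : List E) (σ : E) :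
    G.transStar (s ++ [σ]) = (G.transStar s).bind fun x => G.trans x σ := by
  simp [PDES.transStar, List.foldl_append]

lemma transStar_nil {X E : Type*} [Fintype E] (G : PDES X E) :
    G.transStar [] = some G.x0 := rfl

lemma w_nonneg {X E : Type*} [Fintype E] (G : PDES X E) (s : List E) (σ : E) :
    0 ≤ G.w s σ := by
  cases h : G.transStar s <;> simp [PDES.w, h, G.prob_nonneg]

lemma lang_nonneg {X E : Type*} [Fintype E] (G : PDES X E) (s : List E) :
    0 ≤ G.lang s := by
  induction s using List.reverseRecOn with
  | nil => simp [PDES.lang, langOf, chainProd]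
  | append_singleton s σ ih =>
    show (0:ℝ) ≤ langOf G.w (s ++ [σ])
    rw [langOf_snoc]
    exact mul_nonneg ih (w_nonneg G s σ)

lemma lang_pos_iff {X E : Type*} [Fintype E] (G : PDES X E) (s : List E) :
    0 < G.lang s ↔ (G.transStar s).isSome := by
  induction s using List.reverseRecOn with
  | nil => simp [PDES.lang, langOf, chainProd, transStar_nil]
  | append_singleton s σ ih =>
    show 0 < langOf G.w (s ++ [σ]) ↔ _
    rw [langOf_snoc, transStar_snoc]
    cases h : G.transStar s with
    | none =>
      simp only [PDES.w, h, Option.elim, mul_zero, Option.bind]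
      simp
    | some x =>
      have hw : G.w s σ = G.prob x σ := by simp [PDES.w, h]
      rw [hw]
      constructor
      · intro hpos
        have hx : 0 < G.prob x σ := by
          by_contra hc
          push_neg at hc
          have : G.prob x σ = 0 := le_antisymm hc (G.prob_nonneg x σ)
          rw [this, mul_zero] at hpos; exact lt_irrefl _ hpos
        have := (G.prob_pos_iff x σ).mp hx
        simpa using this
      · intro hsome
        have hx : 0 < G.prob x σ := (G.prob_pos_iff x σ).mpr (by simpa using hsome)
        have hs : 0 < G.lang s := by
          rw [ih]
          simp [h]
        exact mul_pos hs hx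

lemma proj_snoc {E : Type*} [DecidableEq E] (So : Finset E) (s : List E) (σ : E) :
    proj So (s ++ [σ]) = proj So s ++ if σ ∈ So then [σ] else [] := by
  by_cases h : σ ∈ So <;> simp [proj, List.filter_append, h]

lemma eq_nil_or_snoc {α : Type*} (l : List α) : l = [] ∨ ∃ t a, l = t ++ [a] := by
  rcases l.eq_nil_or_concat with h | ⟨t, a, h⟩
  · exact Or.inl h
  · exact Or.inr ⟨t, a, by simpa [List.concat_eq_append] using h⟩

lemma toReach_inl {X Q E : Type*} [Fintype E] [DecidableEq E] (G : PDES X E) (H : PDES Q E)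
    (Sc So : Finset E) :
    ∀ st, ToReach G H Sc So st → ∀ x1 q1 x2 q2, st = Sum.inl (x1, q1, x2, q2) →
    ∃ s1 s2 : List E, proj So s1 = proj So s2 ∧
      G.transStar s1 = some x1 ∧ H.transStar s1 = some q1 ∧
      G.transStar s2 = some x2 ∧ H.transStar s2 = some q2 := by
  intro st h
  induction h with
  | init =>
    intro x1 q1 x2 q2 heq
    simp only [Sum.inl.injEq, Prod.mk.injEq] at heq
    obtain ⟨rfl, rfl, rfl, rfl⟩ := heq
    exact ⟨[], [], rfl, rfl, rfl, rfl, rfl⟩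
  | sync x1 q1 x2 q2 x1' q1' x2' q2' σ _ ht1 ht2 ht3 ht4 _ ih =>
    intro a1 b1 a2 b2 heq
    simp only [Sum.inl.injEq, Prod.mk.injEq] at heq
    obtain ⟨rfl, rfl, rfl, rfl⟩ := heq
    obtain ⟨s1, s2, hp, h1, h2, h3, h4⟩ := ih x1 q1 x2 q2 rfl
    refine ⟨s1 ++ [σ], s2 ++ [σ], ?_, ?_, ?_, ?_, ?_⟩ <;>
      simp [proj_snoc, transStar_snoc, h1, h2, h3, h4, hp, ht1, ht2, ht3, ht4]
  | bad x1 q1 x2 q2 σ _ _ _ _ =>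
    intro a1 b1 a2 b2 heq
    exact absurd heq (by simp)
  | left x1 q1 x2 q2 x1' q1' σ _ hσ ht1 ht2 ih =>
    intro a1 b1 a2 b2 heq
    simp only [Sum.inl.injEq, Prod.mk.injEq] at heq
    obtain ⟨rfl, rfl, rfl, rfl⟩ := heq
    obtain ⟨s1, s2, hp, h1, h2, h3, h4⟩ := ih x1 q1 x2 q2 rfl
    refine ⟨s1 ++ [σ], s2, ?_, ?_, ?_, h3, h4⟩ <;>
      simp [proj_snoc, transStar_snoc, h1, h2, hp, ht1, ht2, hσ]
  | right x1 q1 x2 q2 x2' q2' σ _ hσ ht1 ht2 ih =>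
    intro a1 b1 a2 b2 heq
    simp only [Sum.inl.injEq, Prod.mk.injEq] at heq
    obtain ⟨rfl, rfl, rfl, rfl⟩ := heq
    obtain ⟨s1, s2, hp, h1, h2, h3, h4⟩ := ih x1 q1 x2 q2 rfl
    refine ⟨s1, s2 ++ [σ], ?_, h1, h2, ?_, ?_⟩ <;>
      simp [proj_snoc, transStar_snoc, h3, h4, hp, ht1, ht2, hσ]

lemma reach2 {X Q E : Type*} [Fintype E] [DecidableEq E] (G : PDES X E) (H : PDES Q E)
    (Sc So : Finset E) :
    ∀ n (s1 s2 : List E), s1.length + s2.length ≤ n → proj So s1 = proj So s2 →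
    ∀ x1 q1 x2 q2, G.transStar s1 = some x1 → H.transStar s1 = some q1 →
      G.transStar s2 = some x2 → H.transStar s2 = some q2 →
      ToReach G H Sc So (Sum.inr ()) ∨ ToReach G H Sc So (Sum.inl (x1, q1, x2, q2)) := by
  intro n
  induction n with
  | zero =>
    intro s1 s2 hlen _ x1 q1 x2 q2 h1 h2 h3 h4
    obtain rfl : s1 = [] := List.eq_nil_of_length_eq_zero (by omega)
    obtain rfl : s2 = [] := List.eq_nil_of_length_eq_zero (by omega)
    rw [transStar_nil] at h1 h2 h3 h4
    obtain rfl := Option.some_injective _ h1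
    obtain rfl := Option.some_injective _ h2
    obtain rfl := Option.some_injective _ h3
    obtain rfl := Option.some_injective _ h4
    exact Or.inr ToReach.init
  | succ n ih =>
    intro s1 s2 hlen hproj x1 q1 x2 q2 h1 h2 h3 h4
    rcases eq_nil_or_snoc s1 with rfl | ⟨t1, σ, rfl⟩
    · rcases eq_nil_or_snoc s2 with rfl | ⟨t2, τ, rfl⟩
      · rw [transStar_nil] at h1 h2 h3 h4
        obtain rfl := Option.some_injective _ h1
        obtain rfl := Option.some_injective _ h2
        obtain rfl := Option.some_injective _ h3
        obtain rfl := Option.some_injective _ h4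
        exact Or.inr ToReach.init
      · rw [proj_snoc] at hproj
        by_cases hτ : τ ∈ So
        · exfalso
          rw [if_pos hτ] at hproj
          have : proj So ([] : List E) = [] := rfl
          rw [this] at hproj
          exact List.not_mem_nil (a := τ) (by rw [hproj]; simp)
        · rw [if_neg hτ, List.append_nil] at hproj
          rw [transStar_snoc] at h3 h4
          obtain ⟨x2', hx2', htx⟩ := Option.bind_eq_some_iff.mp h3
          obtain ⟨q2', hq2', htq⟩ := Option.bind_eq_some_iff.mp h4
          have hlen' : ([] : List E).length + t2.length ≤ n := by
            simp only [List.length_append, List.length_cons] at hlen ⊢; omega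
          rcases ih [] t2 hlen' hproj x1 q1 x2' q2' h1 h2 hx2' hq2' with hd | hr
          · exact Or.inl hd
          · exact Or.inr (ToReach.right x1 q1 x2' q2' x2 q2 τ hr hτ htx htq)
    · by_cases hσ : σ ∈ So
      · rcases eq_nil_or_snoc s2 with rfl | ⟨t2, τ, rfl⟩
        · exfalso
          rw [proj_snoc, if_pos hσ] at hproj
          have : proj So ([] : List E) = [] := rfl
          rw [this] at hproj
          exact List.not_mem_nil (a := σ) (by rw [← hproj]; simp)
        · by_cases hτ : τ ∈ So
          · rw [proj_snoc, proj_snoc, if_pos hσ, if_pos hτ] at hproj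
            have hdl := congrArg List.dropLast hproj
            simp only [List.dropLast_concat] at hdl
            have hgl := congrArg List.getLast? hproj
            simp only [List.getLast?_concat] at hgl
            obtain rfl : σ = τ := Option.some_injective _ hgl
            rw [transStar_snoc] at h1 h2 h3 h4
            obtain ⟨x1', hx1', htx1⟩ := Option.bind_eq_some_iff.mp h1
            obtain ⟨q1', hq1', htq1⟩ := Option.bind_eq_some_iff.mp h2
            obtain ⟨x2', hx2', htx2⟩ := Option.bind_eq_some_iff.mp h3
            obtain ⟨q2', hq2', htq2⟩ := Option.bind_eq_some_iff.mp h4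
            have hlen' : t1.length + t2.length ≤ n := by
              simp only [List.length_append, List.length_cons] at hlen ⊢; omega
            rcases ih t1 t2 hlen' hdl x1' q1' x2' q2' hx1' hq1' hx2' hq2' with hd | hr
            · exact Or.inl hd
            · by_cases hc : σ ∈ Sc
              · by_cases heq : G.prob x1' σ * H.prob q2' σ = G.prob x2' σ * H.prob q1' σ
                · exact Or.inr (ToReach.sync x1' q1' x2' q2' x1 q1 x2 q2 σ hr
                    htx1 htq1 htx2 htq2 (Or.inr ⟨hc, heq⟩))
                · exact Or.inl (ToReach.bad x1' q1' x2' q2' σ hr hc heq)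
              · exact Or.inr (ToReach.sync x1' q1' x2' q2' x1 q1 x2 q2 σ hr
                  htx1 htq1 htx2 htq2 (Or.inl hc))
          · rw [proj_snoc So t2 τ, if_neg hτ, List.append_nil] at hproj
            rw [transStar_snoc] at h3 h4
            obtain ⟨x2', hx2', htx⟩ := Option.bind_eq_some_iff.mp h3
            obtain ⟨q2', hq2', htq⟩ := Option.bind_eq_some_iff.mp h4
            have hlen' : (t1 ++ [σ]).length + t2.length ≤ n := by
              simp only [List.length_append, List.length_cons] at hlen ⊢; omega
            rcases ih (t1 ++ [σ]) t2 hlen' hproj x1 q1 x2' q2' h1 h2 hx2' hq2' with hd | hr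
            · exact Or.inl hd
            · exact Or.inr (ToReach.right x1 q1 x2' q2' x2 q2 τ hr hτ htx htq)
      · rw [proj_snoc So t1 σ, if_neg hσ, List.append_nil] at hproj
        rw [transStar_snoc] at h1 h2
        obtain ⟨x1', hx1', htx⟩ := Option.bind_eq_some_iff.mp h1
        obtain ⟨q1', hq1', htq⟩ := Option.bind_eq_some_iff.mp h2
        have hlen' : t1.length + s2.length ≤ n := by
          simp only [List.length_append, List.length_cons] at hlen ⊢; omega
        rcases ih t1 s2 hlen' hproj x1' q1' x2 q2 hx1' hq1' h3 h4 with hd | hr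
        · exact Or.inl hd
        · exact Or.inr (ToReach.left x1' q1' x2 q2 x1 q1 σ hr hσ htx htq)

end Aux

/-- correctness of the observability-verification algorithm. -/
theorem not_observable_iff_d_reachable {X Q E : Type*} [Fintype E] [DecidableEq E]
    (G : PDES X E) (H : PDES Q E) (Sc So : Finset E)
    (hsub : PSub H.lang G.lang) :
    ¬ AutObservable G H Sc So ↔ ToReach G H Sc So (Sum.inr ()) := by
  constructor
  · intro hno
    unfold AutObservable at hno
    push_neg at hno
    obtain ⟨s1, s2, hL1, hL2, hproj, x1, q1, x2, q2, hx1, hq1, hx2, hq2, σ, hc, hne⟩ := hno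
    rcases reach2 G H Sc So (s1.length + s2.length) s1 s2 le_rfl hproj
        x1 q1 x2 q2 hx1 hq1 hx2 hq2 with hd | hr
    · exact hd
    · exact ToReach.bad x1 q1 x2 q2 σ hr hc hne
  · intro hd hobs
    cases hd with
    | bad x1 q1 x2 q2 σ hr hc hne =>
      obtain ⟨s1, s2, hproj, hx1, hq1, hx2, hq2⟩ :=
        toReach_inl G H Sc So _ hr x1 q1 x2 q2 rfl
      have hL1 : 0 < H.lang s1 := (lang_pos_iff H s1).mpr (by simp [hq1])
      have hL2 : 0 < H.lang s2 := (lang_pos_iff H s2).mpr (by simp [hq2])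
      exact hne (hobs s1 s2 hL1 hL2 hproj x1 q1 x2 q2 hx1 hq1 hx2 hq2 σ hc)
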